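/- (Privacy calibration for a cost bound) In addition to the stated filtering assumptions, suppose all coordinates use a common privacy parameter ε > 0, common sensitivity Δ > 0, and common K_δ ∈ [1, 4.5], and set σ_i = σ := (Δ/(2ε))·(K_δ + √(K_δ² + 2ε)) for every i, so V = σ²·I and W̄ := σ²·I. Let B ∈ ℝ^{n×m}, let Q ∈ ℝ^{n×n} and R ∈ ℝ^{m×m} be symmetric positive definite, let K ∈ ℝ^{n×n} be symmetric positive semidefinite with K ⪰ Q, and let x̄, g ∈ ℝⁿ and H ∈ ℝ^{m×n}. Let α be a real number with α − λ_max(K)·tr(W) − x̄ᵀQx̄ + gᵀB(R + BᵀKB)⁻¹Bᵀg > 0, and define for each i: η₅ᵢ := √( ( α − λ_max(K)·tr(W) − x̄ᵀQx̄ + gᵀB(R + BᵀKB)⁻¹Bᵀg ) / ( Δ²·( λ_max(K)·tr(AᵀA)/c_i² + tr(Hᵀ R H) + tr(Q) ) ) ). If ε ≥ (1/8)·((1 + √(36η₅ᵢ + 1))/η₅ᵢ)² for every i, then the total cost satisfies J̃ := tr(KΣ + (Q − K)Σ̄) + x̄ᵀQx̄ − gᵀB(R + BᵀKB)⁻¹Bᵀg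 + tr(Q W̄) + tr(Hᵀ R H W̄) ≤ α, where Σ̄ := (Cᵀ V⁻¹ C + Σ⁻¹)⁻¹. -/

import Mathlib

open Matrix


variable {n : ℕ}

lemma psd_trace_nonneg {M : Matrix (Fin n) (Fin n) ℝ} (hM : M.PosSemidef) :
    0 ≤ M.trace := by
  rw [Matrix.trace]
  apply Finset.sum_nonneg
  intro j _
  have := hM.dotProduct_mulVec_nonneg (Pi.single j 1)
  simpa [dotProduct, Matrix.mulVec, Pi.single_apply, Matrix.diag] using this

lemma psd_trace_mul_nonneg {M P : Matrix (Fin n) (Fin n) ℝ} (hM : M.PosSemidef)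
    (hP : P.PosSemidef) : 0 ≤ (M * P).trace := by
  obtain ⟨B, rfl⟩ : ∃ B : Matrix (Fin n) (Fin n) ℝ, M = star B * B := by
    open scoped MatrixOrder in exact CStarAlgebra.nonneg_iff_eq_star_mul_self.mp hM.nonneg
  rw [Matrix.mul_assoc, Matrix.trace_mul_comm]
  exact psd_trace_nonneg ((hP.mul_mul_conjTranspose_same B))

lemma pd_trace_pos {Q : Matrix (Fin n) (Fin n) ℝ} (hn : 1 ≤ n) (hQ : Q.PosDef) :
    0 < Q.trace := by
  rw [Matrix.trace]
  have : Nonempty (Fin n) := ⟨⟨0, hn⟩⟩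
  apply Finset.sum_pos
  · intro j _
    have := (posDef_iff_dotProduct_mulVec.mp hQ).2 (x := Pi.single j 1) (by intro h; simpa using congrFun h j)
    simpa [dotProduct, Matrix.mulVec, Pi.single_apply, Matrix.diag] using this
  · exact Finset.univ_nonempty

variable {n : ℕ}

lemma lmax_smul_sub_psd {K : Matrix (Fin n) (Fin n) ℝ} (hK : K.PosSemidef) :
    ((⨆ j, hK.1.eigenvalues j) • (1 : Matrix (Fin n) (Fin n) ℝ) - K).PosSemidef := by
  rcases Nat.eq_zero_or_pos n with h0 | hpos
  · subst h0
    constructor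
    · ext i j; exact absurd i.2 (by simp)
    · intro x; simp [Matrix.mulVec, dotProduct, Finsupp.sum_fintype]
  have : Nonempty (Fin n) := ⟨⟨0, hpos⟩⟩
  set L := ⨆ j, hK.1.eigenvalues j with hL
  have hle : ∀ j, hK.1.eigenvalues j ≤ L := fun j =>
    le_ciSup (Set.Finite.bddAbove (Set.finite_range _)) j
  have hdiag : (Matrix.diagonal (fun j => L - hK.1.eigenvalues j)).PosSemidef :=
    Matrix.posSemidef_diagonal_iff.mpr fun j => sub_nonneg.mpr (hle j)
  have key := hdiag.mul_mul_conjTranspose_same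
      (hK.1.eigenvectorUnitary : Matrix (Fin n) (Fin n) ℝ)
  have hunit : (hK.1.eigenvectorUnitary : Matrix (Fin n) (Fin n) ℝ) *
      (star (hK.1.eigenvectorUnitary : Matrix (Fin n) (Fin n) ℝ)) = 1 :=
    Matrix.mem_unitaryGroup_iff.mp (hK.1.eigenvectorUnitary).2
  have heq : L • (1 : Matrix (Fin n) (Fin n) ℝ) - K =
      (hK.1.eigenvectorUnitary : Matrix (Fin n) (Fin n) ℝ) *
        Matrix.diagonal (fun j => L - hK.1.eigenvalues j) *
        (hK.1.eigenvectorUnitary : Matrix (Fin n) (Fin n) ℝ)ᴴ := by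
    have hspec := hK.1.spectral_theorem
    rw [← Matrix.diagonal_sub]
    rw [Matrix.mul_sub, Matrix.sub_mul]
    have h1 : (hK.1.eigenvectorUnitary : Matrix (Fin n) (Fin n) ℝ) *
        Matrix.diagonal (fun _ => L) *
        (hK.1.eigenvectorUnitary : Matrix (Fin n) (Fin n) ℝ)ᴴ =
        L • (1 : Matrix (Fin n) (Fin n) ℝ) := by
      rw [← Matrix.smul_one_eq_diagonal, Matrix.mul_smul, Matrix.mul_one, Matrix.smul_mul]
      rw [← Matrix.star_eq_conjTranspose, hunit]
    have h2 : (hK.1.eigenvectorUnitary : Matrix (Fin n) (Fin n) ℝ) *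
        Matrix.diagonal (fun j => hK.1.eigenvalues j) *
        (hK.1.eigenvectorUnitary : Matrix (Fin n) (Fin n) ℝ)ᴴ = K := by
      conv_rhs => rw [hspec]
      simp [Function.comp, Matrix.star_eq_conjTranspose]
    rw [h1, h2]
  rw [heq]
  exact key

variable {n : ℕ}

lemma psd_smul {N : Matrix (Fin n) (Fin n) ℝ} (hN : N.PosSemidef) {a : ℝ} (ha : 0 ≤ a) :
    (a • N).PosSemidef := by
  refine ⟨?_, fun x => ?_⟩
  · unfold Matrix.IsHermitian
    rw [Matrix.conjTranspose_smul, hN.1]; simp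
  · exact (hN.smul ha).2 x

lemma pd_smul {N : Matrix (Fin n) (Fin n) ℝ} (hN : N.PosDef) {a : ℝ} (ha : 0 < a) :
    (a • N).PosDef := by
  refine ⟨?_, fun x hx => ?_⟩
  · unfold Matrix.IsHermitian
    rw [Matrix.conjTranspose_smul, hN.1.eq]; simp
  · exact (hN.smul ha).2 hx

section wood

variable {S : Matrix (Fin n) (Fin n) ℝ} (hS : S.PosDef) {c : Fin n → ℝ} (hc : ∀ i, 0 < c i)
  {σ2 : ℝ} (hσ2 : 0 < σ2)

include hS hσ2 in
lemma G_posdef : (Matrix.diagonal c * S * Matrix.diagonal c +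
    σ2 • (1 : Matrix (Fin n) (Fin n) ℝ)).PosDef := by
  have hCh : (Matrix.diagonal c)ᴴ = Matrix.diagonal c := by
    simp [Matrix.conjTranspose, Matrix.diagonal_transpose]
  have h1 : (Matrix.diagonal c * S * (Matrix.diagonal c)ᴴ).PosSemidef :=
    (Matrix.PosDef.posSemidef hS).mul_mul_conjTranspose_same (Matrix.diagonal c)
  rw [hCh] at h1
  exact Matrix.PosDef.posSemidef_add h1 (pd_smul Matrix.PosDef.one hσ2)

include hS hσ2 in
lemma M_posdef : (σ2⁻¹ • (Matrix.diagonal c * Matrix.diagonal c) + S⁻¹).PosDef := by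
  have hCh : (Matrix.diagonal c)ᴴ = Matrix.diagonal c := by
    simp [Matrix.conjTranspose, Matrix.diagonal_transpose]
  have h1 : ((Matrix.diagonal c) * 1 * (Matrix.diagonal c)ᴴ).PosSemidef :=
    (Matrix.PosSemidef.one).mul_mul_conjTranspose_same (Matrix.diagonal c)
  rw [hCh, Matrix.mul_one] at h1
  exact Matrix.PosDef.posSemidef_add (psd_smul h1 (le_of_lt (inv_pos.mpr hσ2))) hS.inv

include hS hσ2 in
lemma woodbury_inv :
    (σ2⁻¹ • (Matrix.diagonal c * Matrix.diagonal c) + S⁻¹)⁻¹ =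
      S - S * Matrix.diagonal c *
        (Matrix.diagonal c * S * Matrix.diagonal c + σ2 • (1 : Matrix (Fin n) (Fin n) ℝ))⁻¹ *
        Matrix.diagonal c * S := by
  set C := Matrix.diagonal c with hCdef
  set G := C * S * C + σ2 • (1 : Matrix (Fin n) (Fin n) ℝ) with hGdef
  set M := σ2⁻¹ • (C * C) + S⁻¹ with hMdef
  have hG : G.PosDef := G_posdef hS hσ2
  have hGG : G * G⁻¹ = 1 := Matrix.mul_nonsing_inv _ hG.det_pos.ne'.isUnit
  have hTS : S⁻¹ * S = 1 := Matrix.nonsing_inv_mul _ hS.det_pos.ne'.isUnit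
  have e1 : M * S = σ2⁻¹ • (C * C * S) + 1 := by
    rw [hMdef, Matrix.add_mul, Matrix.smul_mul, hTS]
  have e2 : M * S * C = σ2⁻¹ • (C * G) := by
    rw [e1, Matrix.add_mul, Matrix.smul_mul, Matrix.one_mul]
    have h3 : C * C * S * C = C * G - σ2 • C := by
      rw [hGdef, Matrix.mul_add, mul_smul_comm, Matrix.mul_one]
      rw [← Matrix.mul_assoc, ← Matrix.mul_assoc]
      abel
    rw [h3, smul_sub, smul_smul, inv_mul_cancel₀ hσ2.ne', one_smul]
    abel
  have e3 : M * (S * C * G⁻¹ * C * S) = σ2⁻¹ • (C * C * S) := by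
    have : M * (S * C * G⁻¹ * C * S) = (M * S * C) * (G⁻¹ * (C * S)) := by
      simp only [Matrix.mul_assoc]
    rw [this, e2, Matrix.smul_mul]
    have : C * G * (G⁻¹ * (C * S)) = C * C * S := by
      rw [show C * G * (G⁻¹ * (C * S)) = C * (G * G⁻¹) * (C * S) by simp only [Matrix.mul_assoc],
        hGG, Matrix.mul_one, Matrix.mul_assoc]
    rw [this]
  have key : M * (S - S * C * G⁻¹ * C * S) = 1 := by
    rw [Matrix.mul_sub, e1, e3]
    abel
  exact Matrix.inv_eq_right_inv key

end wood

variable {n : ℕ}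

lemma psd_smul' {N : Matrix (Fin n) (Fin n) ℝ} (hN : N.PosSemidef) {a : ℝ} (ha : 0 ≤ a) :
    (a • N).PosSemidef := by
  refine ⟨?_, fun x => ?_⟩
  · unfold Matrix.IsHermitian
    rw [Matrix.conjTranspose_smul, hN.1]; simp
  · exact (hN.smul ha).2 x

lemma bound_psd {S : Matrix (Fin n) (Fin n) ℝ} (hS : S.PosDef) {c : Fin n → ℝ}
    (hc : ∀ i, 0 < c i) {σ2 : ℝ} (hσ2 : 0 < σ2)
    (hM : (σ2⁻¹ • (Matrix.diagonal c * Matrix.diagonal c) + S⁻¹).PosDef) :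
    (σ2 • Matrix.diagonal (fun j => (c j ^ 2)⁻¹) -
      (σ2⁻¹ • (Matrix.diagonal c * Matrix.diagonal c) + S⁻¹)⁻¹).PosSemidef := by
  set C := Matrix.diagonal c with hCdef
  set Dinv := Matrix.diagonal (fun j : Fin n => (c j ^ 2)⁻¹) with hDdef
  set M := σ2⁻¹ • (C * C) + S⁻¹ with hMdef
  have hMM : M * M⁻¹ = 1 := Matrix.mul_nonsing_inv _ hM.det_pos.ne'.isUnit
  have hMM' : M⁻¹ * M = 1 := Matrix.nonsing_inv_mul _ hM.det_pos.ne'.isUnit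
  have hCC : C * C * Dinv = 1 := by
    rw [hCdef, hDdef, Matrix.diagonal_mul_diagonal, Matrix.diagonal_mul_diagonal]
    ext i j
    by_cases h : i = j
    · subst h
      simp [Matrix.diagonal_apply_eq, Matrix.one_apply_eq, pow_two]
      field_simp [(hc i).ne']
    · simp [Matrix.diagonal_apply_ne _ h, Matrix.one_apply_ne h]
  have hCC' : Dinv * (C * C) = 1 := by
    rw [hCdef, hDdef, Matrix.diagonal_mul_diagonal, Matrix.diagonal_mul_diagonal]
    ext i j
    by_cases h : i = j
    · subst h
      simp [Matrix.diagonal_apply_eq, Matrix.one_apply_eq, pow_two]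
      field_simp [(hc i).ne']
    · simp [Matrix.diagonal_apply_ne _ h, Matrix.one_apply_ne h]
  set T := S⁻¹ with hTdef
  set Y := T + σ2 • (T * Dinv * T) with hYdef
  -- M * Dinv = σ2⁻¹ • 1 + T * Dinv
  have f1 : M * Dinv = σ2⁻¹ • (1 : Matrix (Fin n) (Fin n) ℝ) + T * Dinv := by
    rw [hMdef, Matrix.add_mul, Matrix.smul_mul, hCC]
  have f2 : Dinv * M = σ2⁻¹ • (1 : Matrix (Fin n) (Fin n) ℝ) + Dinv * T := by
    rw [hMdef, Matrix.mul_add, mul_smul_comm, hCC']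
  have f3 : σ2 • (M * Dinv * M) - M = Y := by
    rw [f1, Matrix.add_mul, Matrix.smul_mul, Matrix.one_mul, Matrix.mul_assoc, f2, hYdef, hMdef]
    have hs : σ2 * σ2⁻¹ = 1 := mul_inv_cancel₀ hσ2.ne'
    have hs2 : σ2 * (σ2⁻¹ * σ2⁻¹) = σ2⁻¹ := by field_simp
    simp only [hs2, Matrix.mul_add, Matrix.add_mul, mul_smul_comm, Matrix.smul_mul,
      Matrix.mul_one, Matrix.one_mul, smul_add, smul_smul, smul_sub, Matrix.mul_assoc, hs,
      one_smul]
    abel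
  have f4 : σ2 • Dinv - M⁻¹ = M⁻¹ * Y * M⁻¹ := by
    rw [← f3]
    rw [Matrix.mul_sub, Matrix.sub_mul]
    rw [mul_smul_comm, Matrix.smul_mul]
    have g1 : M⁻¹ * (M * Dinv * M) * M⁻¹ = Dinv := by
      rw [show M⁻¹ * (M * Dinv * M) * M⁻¹ = (M⁻¹ * M) * Dinv * (M * M⁻¹) by
        simp only [Matrix.mul_assoc], hMM', hMM, Matrix.one_mul, Matrix.mul_one]
    have g2 : M⁻¹ * M * M⁻¹ = M⁻¹ := by rw [hMM', Matrix.one_mul]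
    rw [g1, g2]
  rw [f4]
  have hYpsd : Y.PosSemidef := by
    have hT : T.PosSemidef := hS.inv.posSemidef
    have hDpsd : Dinv.PosSemidef := Matrix.posSemidef_diagonal_iff.mpr
      (fun j => by positivity)
    have h1 : (T * Dinv * Tᴴ).PosSemidef := hDpsd.mul_mul_conjTranspose_same T
    rw [hT.1] at h1
    exact hT.add (psd_smul' h1 hσ2.le)
  have hMinvH : (M⁻¹)ᴴ = M⁻¹ := hM.inv.1
  have := hYpsd.mul_mul_conjTranspose_same M⁻¹
  rwa [hMinvH] at this

lemma calib {Δ ε Kδ η : ℝ} (hΔ : 0 < Δ) (hε : 0 < ε) (hKδ1 : 1 ≤ Kδ) (hKδ2 : Kδ ≤ 4.5)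
    (hη : 0 < η) (hcal : (1/8) * ((1 + Real.sqrt (36 * η + 1)) / η) ^ 2 ≤ ε) :
    Δ / (2 * ε) * (Kδ + Real.sqrt (Kδ ^ 2 + 2 * ε)) ≤ Δ * η := by
  set u := Real.sqrt (36 * η + 1) with hudef
  have hu2 : u ^ 2 = 36 * η + 1 := Real.sq_sqrt (by positivity)
  have hu1 : 1 ≤ u := by
    rw [hudef]
    nth_rewrite 1 [show (1:ℝ) = Real.sqrt 1 by simp]
    exact Real.sqrt_le_sqrt (by linarith)
  set t := Real.sqrt (2 * ε) with htdef
  have ht2 : t ^ 2 = 2 * ε := Real.sq_sqrt (by positivity)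
  have ht0 : 0 < t := Real.sqrt_pos.mpr (by positivity)
  set s := (1 + u) / (2 * η) with hsdef
  have hs0 : 0 ≤ s := by positivity
  have hst : s ≤ t := by
    have h1 : s ^ 2 ≤ 2 * ε := by
      rw [hsdef]
      have : ((1 + u) / (2 * η)) ^ 2 = (1/4) * ((1 + u) / η) ^ 2 := by
        field_simp; ring
      rw [this]
      nlinarith [hcal]
    calc s = Real.sqrt (s ^ 2) := (Real.sqrt_sq hs0).symm
      _ ≤ Real.sqrt (2 * ε) := Real.sqrt_le_sqrt h1
  have hηs : 1 ≤ η * s := by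
    rw [hsdef]
    rw [show η * ((1 + u) / (2 * η)) = (1 + u) / 2 by field_simp]
    linarith
  have hroot : η * s ^ 2 - s - 9 = 0 := by
    rw [hsdef]
    field_simp
    nlinarith [hu2]
  have hquad : 9 + t ≤ η * (2 * ε) := by
    have h1 : 0 ≤ (t - s) * (η * (t + s) - 1) := by
      apply mul_nonneg (by linarith)
      nlinarith [mul_nonneg hη.le ht0.le]
    nlinarith [h1, hroot, ht2]
  have hsqrt : Real.sqrt (Kδ ^ 2 + 2 * ε) ≤ Kδ + t := by
    have : Kδ ^ 2 + 2 * ε ≤ (Kδ + t) ^ 2 := by nlinarith [mul_nonneg (by linarith : (0:ℝ) ≤ Kδ) ht0.le]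
    calc Real.sqrt (Kδ ^ 2 + 2 * ε) ≤ Real.sqrt ((Kδ + t) ^ 2) := Real.sqrt_le_sqrt this
      _ = Kδ + t := Real.sqrt_sq (by linarith)
  have hnum : Kδ + Real.sqrt (Kδ ^ 2 + 2 * ε) ≤ η * (2 * ε) := by
    have : Kδ + Real.sqrt (Kδ ^ 2 + 2 * ε) ≤ 2 * Kδ + t := by linarith
    have h9 : 2 * Kδ ≤ 9 := by linarith
    linarith
  rw [div_mul_eq_mul_div, div_le_iff₀ (by positivity : (0:ℝ) < 2 * ε)]
  calc Δ * (Kδ + Real.sqrt (Kδ ^ 2 + 2 * ε)) ≤ Δ * (η * (2 * ε)) := by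
        apply mul_le_mul_of_nonneg_left hnum hΔ.le
    _ = Δ * η * (2 * ε) := by ring


lemma real_conjT {k l : ℕ} (X : Matrix (Fin k) (Fin l) ℝ) : Xᴴ = Xᵀ := by
  ext i j; simp [Matrix.conjTranspose_apply]

set_option maxHeartbeats 1000000 in
/-- Privacy calibration for a cost bound: with common privacy parameters and
`ε ≥ (1/8)((1+√(36η₅ᵢ+1))/η₅ᵢ)²` for every coordinate `i`, the total private
LQG cost `J̃` is at most `α`. -/
theorem privacy_calibration_cost {n m : ℕ} (hn : 1 ≤ n)
    (A W S : Matrix (Fin n) (Fin n) ℝ)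
    (c : Fin n → ℝ) (hc : ∀ i, 0 < c i)
    (Δ ε Kδ σc : ℝ) (hΔ : 0 < Δ) (hε : 0 < ε) (hKδ1 : 1 ≤ Kδ) (hKδ2 : Kδ ≤ 4.5)
    (hσc : σc = Δ / (2 * ε) * (Kδ + Real.sqrt (Kδ ^ 2 + 2 * ε)))
    (hW : W.PosDef) (hS : S.PosDef)
    (hric : S = A * S * Aᵀ -
        A * S * (Matrix.diagonal c)ᵀ *
          (Matrix.diagonal c * S * (Matrix.diagonal c)ᵀ +
            σc ^ 2 • (1 : Matrix (Fin n) (Fin n) ℝ))⁻¹ *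
          Matrix.diagonal c * S * Aᵀ + W)
    (B : Matrix (Fin n) (Fin m) ℝ) (Q : Matrix (Fin n) (Fin n) ℝ)
    (R : Matrix (Fin m) (Fin m) ℝ) (hQ : Q.PosDef) (hR : R.PosDef)
    (K : Matrix (Fin n) (Fin n) ℝ) (hK : K.PosSemidef) (hKQ : (K - Q).PosSemidef)
    (xb g : Fin n → ℝ) (H : Matrix (Fin m) (Fin n) ℝ) (α : ℝ)
    (hα : 0 < α - (⨆ j, hK.1.eigenvalues j) * W.trace - xb ⬝ᵥ (Q *ᵥ xb) +
        g ⬝ᵥ ((B * (R + Bᵀ * K * B)⁻¹ * Bᵀ) *ᵥ g))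
    (hcal : ∀ i,
      (1 / 8) * ((1 + Real.sqrt (36 * Real.sqrt
            ((α - (⨆ j, hK.1.eigenvalues j) * W.trace - xb ⬝ᵥ (Q *ᵥ xb) +
              g ⬝ᵥ ((B * (R + Bᵀ * K * B)⁻¹ * Bᵀ) *ᵥ g)) /
            (Δ ^ 2 * ((⨆ j, hK.1.eigenvalues j) * (Aᵀ * A).trace / c i ^ 2 +
              (Hᵀ * R * H).trace + Q.trace))) + 1)) /
          Real.sqrt
            ((α - (⨆ j, hK.1.eigenvalues j) * W.trace - xb ⬝ᵥ (Q *ᵥ xb) +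
              g ⬝ᵥ ((B * (R + Bᵀ * K * B)⁻¹ * Bᵀ) *ᵥ g)) /
            (Δ ^ 2 * ((⨆ j, hK.1.eigenvalues j) * (Aᵀ * A).trace / c i ^ 2 +
              (Hᵀ * R * H).trace + Q.trace)))) ^ 2 ≤ ε) :
    (K * S + (Q - K) *
        (((Matrix.diagonal c)ᵀ * (σc ^ 2 • (1 : Matrix (Fin n) (Fin n) ℝ))⁻¹ *
          Matrix.diagonal c + S⁻¹)⁻¹)).trace +
      xb ⬝ᵥ (Q *ᵥ xb) - g ⬝ᵥ ((B * (R + Bᵀ * K * B)⁻¹ * Bᵀ) *ᵥ g) +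
      (Q * (σc ^ 2 • (1 : Matrix (Fin n) (Fin n) ℝ))).trace +
      (Hᵀ * R * H * (σc ^ 2 • (1 : Matrix (Fin n) (Fin n) ℝ))).trace ≤ α := by
  have hne : Nonempty (Fin n) := ⟨⟨0, hn⟩⟩
  have hσc0 : 0 < σc := by
    rw [hσc]
    have h2 : 0 < Kδ + Real.sqrt (Kδ ^ 2 + 2 * ε) := by
      have := Real.sqrt_nonneg (Kδ ^ 2 + 2 * ε); linarith
    positivity
  have hσ2 : 0 < σc ^ 2 := by positivity
  set C := Matrix.diagonal c with hCdef
  have hCT : Cᵀ = C := by rw [hCdef, Matrix.diagonal_transpose]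
  set L := ⨆ j, hK.1.eigenvalues j with hLdef
  have hL0 : 0 ≤ L := le_trans (hK.eigenvalues_nonneg (Classical.arbitrary _))
    (le_ciSup (Set.Finite.bddAbove (Set.finite_range _)) _)
  have hKL : ((L • (1 : Matrix (Fin n) (Fin n) ℝ)) - K).PosSemidef := lmax_smul_sub_psd hK
  clear_value L
  set M := (σc ^ 2)⁻¹ • (C * C) + S⁻¹ with hMdef
  have hMgoal : Cᵀ * (σc ^ 2 • (1 : Matrix (Fin n) (Fin n) ℝ))⁻¹ * C + S⁻¹ = M := by
    have hinv : (σc ^ 2 • (1 : Matrix (Fin n) (Fin n) ℝ))⁻¹ =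
        (σc ^ 2)⁻¹ • (1 : Matrix (Fin n) (Fin n) ℝ) := by
      apply Matrix.inv_eq_right_inv
      rw [Matrix.smul_mul, mul_smul_comm, Matrix.one_mul, smul_smul,
        mul_inv_cancel₀ hσ2.ne', one_smul]
    rw [hinv, hCdef, Matrix.diagonal_transpose, mul_smul_comm, Matrix.mul_one,
      Matrix.smul_mul]
  have hM : M.PosDef := M_posdef hS hσ2
  have hMinv : M⁻¹.PosSemidef := hM.inv.posSemidef
  have hwood : M⁻¹ = S - S * C *
      (C * S * C + σc ^ 2 • (1 : Matrix (Fin n) (Fin n) ℝ))⁻¹ * C * S :=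
    woodbury_inv hS hσ2
  have hSd : S = A * M⁻¹ * Aᵀ + W := by
    rw [hwood]
    conv_lhs => rw [hric]
    simp only [Matrix.mul_sub, Matrix.sub_mul, Matrix.diagonal_transpose, ← hCdef, hCT,
      Matrix.mul_assoc]
  set Dinv := Matrix.diagonal (fun j : Fin n => (c j ^ 2)⁻¹) with hDdef
  have hAtA : (Aᵀ * A).PosSemidef := by
    have := Matrix.posSemidef_conjTranspose_mul_self A
    rwa [real_conjT] at this
  -- i1
  have i1 : (K * S).trace = (Aᵀ * K * A * M⁻¹).trace + (K * W).trace := by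
    conv_lhs => rw [hSd]
    rw [Matrix.mul_add, Matrix.trace_add]
    congr 1
    rw [show K * (A * M⁻¹ * Aᵀ) = (K * A * M⁻¹) * Aᵀ by simp only [Matrix.mul_assoc]]
    rw [Matrix.trace_mul_comm]
    simp only [Matrix.mul_assoc]
  -- i2
  have i2 : (Aᵀ * K * A * M⁻¹).trace ≤ L * (Aᵀ * A * M⁻¹).trace := by
    have hpsd1 : (Aᵀ * (L • (1 : Matrix (Fin n) (Fin n) ℝ) - K) * A).PosSemidef := by
      have := hKL.conjTranspose_mul_mul_same A
      rwa [real_conjT] at this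
    have h := psd_trace_mul_nonneg hpsd1 hMinv
    have he : Aᵀ * (L • (1 : Matrix (Fin n) (Fin n) ℝ) - K) * A =
        L • (Aᵀ * A) - Aᵀ * K * A := by
      rw [Matrix.mul_sub, Matrix.sub_mul, mul_smul_comm, Matrix.smul_mul, Matrix.mul_one]
    rw [he, Matrix.sub_mul, Matrix.trace_sub, Matrix.smul_mul, Matrix.trace_smul,
      smul_eq_mul] at h
    linarith
  -- i3
  have i3 : (Aᵀ * A * M⁻¹).trace ≤ σc ^ 2 * (Aᵀ * A * Dinv).trace := by
    have hbd := bound_psd hS hc hσ2 hM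
    have h := psd_trace_mul_nonneg hbd hAtA
    rw [Matrix.sub_mul, Matrix.trace_sub, Matrix.smul_mul, Matrix.trace_smul,
      smul_eq_mul, Matrix.trace_mul_comm Dinv, Matrix.trace_mul_comm M⁻¹] at h
    linarith
  -- min of c
  obtain ⟨i0, -, hi0⟩ := Finset.exists_min_image Finset.univ c ⟨⟨0, hn⟩, Finset.mem_univ _⟩
  have hdiagnn : ∀ j, 0 ≤ (Aᵀ * A) j j := by
    intro j
    have h := hAtA.dotProduct_mulVec_nonneg (Pi.single j 1)
    simpa [dotProduct, Matrix.mulVec, Pi.single_apply] using h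
  -- i4
  have i4 : (Aᵀ * A * Dinv).trace ≤ (c i0 ^ 2)⁻¹ * (Aᵀ * A).trace := by
    have h1 : (Aᵀ * A * Dinv).trace = ∑ j, (Aᵀ * A) j j * (c j ^ 2)⁻¹ := by
      simp [hDdef, Matrix.trace, Matrix.diag, Matrix.mul_diagonal]
    have h2 : (Aᵀ * A).trace = ∑ j, (Aᵀ * A) j j := rfl
    rw [h1, h2, Finset.mul_sum]
    apply Finset.sum_le_sum
    intro j _
    rw [mul_comm ((c i0 ^ 2)⁻¹)]
    apply mul_le_mul_of_nonneg_left _ (hdiagnn j)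
    apply inv_anti₀ (pow_pos (hc i0) 2)
    have := hi0 j (Finset.mem_univ j)
    nlinarith [hc i0, hc j]
  -- i5
  have i5 : (K * W).trace ≤ L * W.trace := by
    have h := psd_trace_mul_nonneg hKL hW.posSemidef
    rw [Matrix.sub_mul, Matrix.trace_sub, Matrix.smul_mul, Matrix.one_mul,
      Matrix.trace_smul, smul_eq_mul] at h
    linarith
  -- i6
  have i6 : ((Q - K) * M⁻¹).trace ≤ 0 := by
    have h := psd_trace_mul_nonneg hKQ hMinv
    have he : (Q - K) * M⁻¹ = -((K - Q) * M⁻¹) := by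
      rw [← Matrix.neg_mul, neg_sub]
    rw [he, Matrix.trace_neg]
    linarith
  -- i7, i8
  have i7 : (Q * (σc ^ 2 • (1 : Matrix (Fin n) (Fin n) ℝ))).trace = σc ^ 2 * Q.trace := by
    rw [mul_smul_comm, Matrix.mul_one, Matrix.trace_smul, smul_eq_mul]
  have i8 : (Hᵀ * R * H * (σc ^ 2 • (1 : Matrix (Fin n) (Fin n) ℝ))).trace =
      σc ^ 2 * (Hᵀ * R * H).trace := by
    rw [mul_smul_comm, Matrix.mul_one, Matrix.trace_smul, smul_eq_mul]
  have i9 : 0 ≤ (Hᵀ * R * H).trace := by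
    apply psd_trace_nonneg
    have := hR.posSemidef.conjTranspose_mul_mul_same H
    rwa [real_conjT] at this
  have i10 : 0 < Q.trace := pd_trace_pos hn hQ
  have i11 : 0 ≤ (Aᵀ * A).trace := psd_trace_nonneg hAtA
  -- calibration
  set N := α - L * W.trace - xb ⬝ᵥ (Q *ᵥ xb) +
      g ⬝ᵥ ((B * (R + Bᵀ * K * B)⁻¹ * Bᵀ) *ᵥ g) with hNdef
  set d := L * (Aᵀ * A).trace / c i0 ^ 2 + (Hᵀ * R * H).trace + Q.trace with hddef
  clear_value N d
  have hd : 0 < d := by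
    have h1 : 0 ≤ L * (Aᵀ * A).trace / c i0 ^ 2 := by positivity
    rw [hddef]; linarith
  have hη : 0 < Real.sqrt (N / (Δ ^ 2 * d)) := Real.sqrt_pos.mpr (by positivity)
  have hcal0 := hcal i0
  rw [← hddef] at hcal0
  have hσδ : σc ≤ Δ * Real.sqrt (N / (Δ ^ 2 * d)) := by
    rw [hσc]
    exact calib hΔ hε hKδ1 hKδ2 hη hcal0
  have hσ2N : σc ^ 2 * d ≤ N := by
    have h1 : σc ^ 2 ≤ (Δ * Real.sqrt (N / (Δ ^ 2 * d))) ^ 2 :=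
      pow_le_pow_left₀ hσc0.le hσδ 2
    rw [mul_pow, Real.sq_sqrt (by positivity)] at h1
    have h2 : Δ ^ 2 * (N / (Δ ^ 2 * d)) = N / d := by
      field_simp
    rw [h2] at h1
    calc σc ^ 2 * d ≤ N / d * d := by
          apply mul_le_mul_of_nonneg_right h1 hd.le
      _ = N := by field_simp
  -- assemble
  rw [hMgoal, Matrix.trace_add, i7, i8]
  have e2 : L * (Aᵀ * A * M⁻¹).trace ≤ L * (σc ^ 2 * ((c i0 ^ 2)⁻¹ * (Aᵀ * A).trace)) := by
    apply mul_le_mul_of_nonneg_left _ hL0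
    calc (Aᵀ * A * M⁻¹).trace ≤ σc ^ 2 * (Aᵀ * A * Dinv).trace := i3
      _ ≤ σc ^ 2 * ((c i0 ^ 2)⁻¹ * (Aᵀ * A).trace) := by
          apply mul_le_mul_of_nonneg_left i4 hσ2.le
  have e3 : L * (σc ^ 2 * ((c i0 ^ 2)⁻¹ * (Aᵀ * A).trace)) =
      σc ^ 2 * (L * (Aᵀ * A).trace / c i0 ^ 2) := by
    field_simp
  have hσ2N' : σc ^ 2 * (L * (Aᵀ * A).trace / c i0 ^ 2) + σc ^ 2 * (Hᵀ * R * H).trace +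
      σc ^ 2 * Q.trace ≤ N := by
    rw [hddef] at hσ2N; linarith [hσ2N]
  have hNα : N = α - L * W.trace - xb ⬝ᵥ (Q *ᵥ xb) +
      g ⬝ᵥ ((B * (R + Bᵀ * K * B)⁻¹ * Bᵀ) *ᵥ g) := hNdef
  linarith [i1, i2, i5, i6, e2, e3, hσ2N']
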